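/- The constant 1 in the inequality ‖x‖²‖a‖² − (Re⟨x,a⟩)² ≤ C·r²‖x‖² (valid for all x in the closed ball of radius r around a, when ‖a‖ > r) is best possible: for every C < 1 there exist an inner product space H, vectors x, a ∈ H and r > 0 with ‖x − a‖ ≤ r < ‖a‖ such that ‖x‖²‖a‖² − (Re⟨x,a⟩)² > C·r²‖x‖². -/

import Mathlib

open scoped InnerProductSpace RealInnerProductSpace

noncomputable def v (t : ℝ) : EuclideanSpace ℝ (Fin 2) := WithLp.toLp 2 ![1, t]
noncomputable def v0 (t : ℝ) : EuclideanSpace ℝ (Fin 2) := WithLp.toLp 2 ![0, t]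

theorem stmt_4 (C : ℝ) (hC : C < 1) :
    ∃ (x a : EuclideanSpace ℝ (Fin 2)) (r : ℝ), 0 < r ∧ ‖x - a‖ ≤ r ∧ r < ‖a‖ ∧
      C * (r ^ 2 * ‖x‖ ^ 2) < ‖x‖ ^ 2 * ‖a‖ ^ 2 - (⟪x, a⟫_ℝ) ^ 2 := by
  set s : ℝ := min ((1 - C) / 2) (1 / 2) with hs_def
  have hs : 0 < s := by
    apply lt_min <;> linarith
  set r : ℝ := Real.sqrt s with hr_def
  have hr : 0 < r := Real.sqrt_pos.mpr hs
  have hr2 : r ^ 2 = s := Real.sq_sqrt hs.le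
  refine ⟨(v r), (v 0), r, hr, ?_, ?_, ?_⟩
  · have : ((v r) - (v 0) : EuclideanSpace ℝ (Fin 2)) = (v0 r) := by
      ext i
      fin_cases i <;> simp [v, v0]
    rw [this]
    rw [EuclideanSpace.norm_eq]
    simp only [v0, Fin.sum_univ_two, Matrix.cons_val_zero, Matrix.cons_val_one, Matrix.head_cons,
      Real.norm_eq_abs, sq_abs]
    rw [show (0:ℝ)^2 + r^2 = r^2 by ring, Real.sqrt_sq hr.le]
  · have ha : ‖((v 0) : EuclideanSpace ℝ (Fin 2))‖ = 1 := by
      rw [EuclideanSpace.norm_eq]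
      simp [v, v0, Fin.sum_univ_two]
    rw [ha]
    have : s ≤ 1 / 2 := min_le_right _ _
    nlinarith
  · have hx : ‖((v r) : EuclideanSpace ℝ (Fin 2))‖ ^ 2 = 1 + r ^ 2 := by
      rw [EuclideanSpace.norm_eq]
      rw [Real.sq_sqrt (by positivity)]
      simp [v, v0, Fin.sum_univ_two]
    have ha : ‖((v 0) : EuclideanSpace ℝ (Fin 2))‖ = 1 := by
      rw [EuclideanSpace.norm_eq]
      simp [v, v0, Fin.sum_univ_two]
    have hip : (⟪((v r) : EuclideanSpace ℝ (Fin 2)), (v 0)⟫_ℝ) = 1 := by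
      simp [v, v0, PiLp.inner_apply, Fin.sum_univ_two]
    rw [hx, ha, hip, hr2]
    have h1 : s ≤ (1 - C) / 2 := min_le_left _ _
    nlinarith [mul_le_mul_of_nonneg_right (show C ≤ 1 - 2*s by linarith)
      (show (0:ℝ) ≤ s*(1+s) by positivity), mul_pos hs hs, mul_pos (mul_pos hs hs) hs]
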